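/- Bound via preceding neighbors under the lenient update: Let d : ℕ with 0 < d. Let e : Fin k → Finset V and w' : Fin k → ℝ be a stack run with the lenient update δ_lenient, i.e. 0 ≤ w' i and (e i).Nonempty for all i, W (e i) = w' i + ∑_{v ∈ e i} ∑_{j < i, v ∈ e j} w' j / (e j).card for every i, and suppose (e i).card ≤ d for all i. For an index i, let P(i) := {j : Fin k | j ≤ i ∧ (e j ∩ e i).Nonempty}. Then for every i, (1/d) · ∑_{j ∈ P(i)} w' j ≤ W (e i). -/

import Mathlib

/-- Bound via preceding neighbors under the lenient update: for a stack run
`e, w'` with the lenient update and all edge sizes at most `d`, with `P i` the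
set of preceding neighboring stack edges of `e i` (including `i`), we have
`(1/d) * ∑ j ∈ P i, w' j ≤ W (e i)`. -/
theorem stack_lenient_preceding_neighbors_bound
    {V : Type*} [Fintype V] [DecidableEq V] {k : ℕ}
    (d : ℕ) (hd : 0 < d)
    (W : Finset V → ℝ) (e : Fin k → Finset V) (w' : Fin k → ℝ)
    (hw_nonneg : ∀ i, 0 ≤ w' i)
    (hne : ∀ i : Fin k, (e i).Nonempty)
    (hrun : ∀ i : Fin k, W (e i) = w' i +
      ∑ v ∈ e i, ∑ j ∈ Finset.univ.filter (fun j : Fin k => j < i ∧ v ∈ e j),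
        w' j / ((e j).card : ℝ))
    (hcard : ∀ i : Fin k, (e i).card ≤ d) :
    ∀ i : Fin k,
      (1 / (d : ℝ)) *
        ∑ j ∈ Finset.univ.filter (fun j : Fin k => j ≤ i ∧ (e j ∩ e i).Nonempty), w' j
          ≤ W (e i) := by
  intro i
  have hdR : (0:ℝ) < d := by exact_mod_cast hd
  set S := Finset.univ.filter (fun j : Fin k => j < i ∧ (e j ∩ e i).Nonempty) with hS
  -- Step 1: split off the i term
  have hiS : i ∉ S := by simp [hS]
  have hsub : Finset.univ.filter (fun j : Fin k => j ≤ i ∧ (e j ∩ e i).Nonempty)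
      ⊆ insert i S := by
    intro j hj
    simp only [Finset.mem_filter, Finset.mem_univ, true_and] at hj
    rcases lt_or_eq_of_le hj.1 with h | h
    · exact Finset.mem_insert.2 (Or.inr (by simp [hS, h, hj.2]))
    · exact Finset.mem_insert.2 (Or.inl h)
  have h1 : ∑ j ∈ Finset.univ.filter (fun j : Fin k => j ≤ i ∧ (e j ∩ e i).Nonempty), w' j
      ≤ w' i + ∑ j ∈ S, w' j := by
    have := Finset.sum_le_sum_of_subset_of_nonneg hsub
      (fun j _ _ => hw_nonneg j)
    rwa [Finset.sum_insert hiS] at this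
  -- Step 2: rewrite the double sum
  have hswap : ∑ v ∈ e i, ∑ j ∈ Finset.univ.filter (fun j : Fin k => j < i ∧ v ∈ e j),
        w' j / ((e j).card : ℝ)
      = ∑ j ∈ Finset.univ.filter (fun j : Fin k => j < i),
          ((e j ∩ e i).card : ℝ) * (w' j / ((e j).card : ℝ)) := by
    have : ∀ v ∈ e i, ∑ j ∈ Finset.univ.filter (fun j : Fin k => j < i ∧ v ∈ e j),
        w' j / ((e j).card : ℝ)
        = ∑ j ∈ Finset.univ.filter (fun j : Fin k => j < i),
            (if v ∈ e j then w' j / ((e j).card : ℝ) else 0) := by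
      intro v _
      rw [← Finset.sum_filter, Finset.filter_filter]
    rw [Finset.sum_congr rfl this, Finset.sum_comm]
    refine Finset.sum_congr rfl (fun j _ => ?_)
    rw [Finset.sum_ite_mem, Finset.sum_const, Finset.inter_comm (e i), nsmul_eq_mul]
  -- Step 3: termwise bound on S
  have h2 : ∑ j ∈ S, w' j / (d : ℝ)
      ≤ ∑ j ∈ Finset.univ.filter (fun j : Fin k => j < i),
          ((e j ∩ e i).card : ℝ) * (w' j / ((e j).card : ℝ)) := by
    have hsub2 : S ⊆ Finset.univ.filter (fun j : Fin k => j < i) := by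
      intro j hj
      simp only [hS, Finset.mem_filter, Finset.mem_univ, true_and] at hj ⊢
      exact hj.1
    calc ∑ j ∈ S, w' j / (d : ℝ)
        ≤ ∑ j ∈ S, ((e j ∩ e i).card : ℝ) * (w' j / ((e j).card : ℝ)) := by
          refine Finset.sum_le_sum (fun j hj => ?_)
          simp only [hS, Finset.mem_filter, Finset.mem_univ, true_and] at hj
          have hc : (0:ℝ) < ((e j).card : ℝ) := by
            exact_mod_cast Finset.card_pos.mpr (hne j)
          have hcd : ((e j).card : ℝ) ≤ (d : ℝ) := by exact_mod_cast hcard j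
          have h1' : w' j / (d : ℝ) ≤ w' j / ((e j).card : ℝ) :=
            div_le_div_of_nonneg_left (hw_nonneg j) hc hcd |>.trans_eq rfl
          have hone : (1:ℝ) ≤ ((e j ∩ e i).card : ℝ) := by
            exact_mod_cast Finset.card_pos.mpr hj.2
          calc w' j / (d : ℝ) ≤ w' j / ((e j).card : ℝ) := h1'
            _ ≤ ((e j ∩ e i).card : ℝ) * (w' j / ((e j).card : ℝ)) :=
              le_mul_of_one_le_left (div_nonneg (hw_nonneg j) hc.le) hone
      _ ≤ _ := Finset.sum_le_sum_of_subset_of_nonneg hsub2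
          (fun j _ _ => mul_nonneg (by positivity) (div_nonneg (hw_nonneg j) (Nat.cast_nonneg _)))
  -- Combine
  rw [hrun i]
  calc (1 / (d : ℝ)) *
        ∑ j ∈ Finset.univ.filter (fun j : Fin k => j ≤ i ∧ (e j ∩ e i).Nonempty), w' j
      ≤ (1 / (d : ℝ)) * (w' i + ∑ j ∈ S, w' j) := by
        exact mul_le_mul_of_nonneg_left h1 (by positivity)
    _ = w' i / d + ∑ j ∈ S, w' j / (d : ℝ) := by
        rw [mul_add, Finset.mul_sum]
        simp [div_eq_mul_inv, mul_comm]
    _ ≤ w' i + ∑ j ∈ S, w' j / (d : ℝ) := by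
        gcongr
        exact div_le_self (hw_nonneg i) (by exact_mod_cast hd)
    _ ≤ _ := by
        rw [hswap]
        exact add_le_add_right h2 _
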